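/- Fix d ≥ 1 and let H_A = H_B = H_C = H_D = ℂ^d with standard orthonormal basis {|i⟩}_{i ∈ ℤ/d}. Let V : H_A ⊗ H_B → H_C ⊗ H_D be the unitary V := Σ_{i,j ∈ ℤ/d} ( |i⟩_C ⟨i|_A ) ⊗ ( |j+i⟩_D ⟨j|_B ), with addition modulo d. Then for every linear operator M on H_A: M lies in the complex linear span of { |i⟩⟨i| : i ∈ ℤ/d } if and only if [ V (M ⊗ 1_B) V* , 1_C ⊗ N ] = 0 for every linear operator N on H_D. (By the paper's Definition 4, this says the computational-basis decomposition {|i⟩⟨i|_A} is preferred by D given V.) -/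

import Mathlib

open Matrix
open scoped Kronecker

lemma conjV_apply (d : ℕ) [NeZero d] (B : Matrix (ZMod d × ZMod d) (ZMod d × ZMod d) ℂ)
    (p q : ZMod d × ZMod d) :
    ((Matrix.of fun p q : ZMod d × ZMod d => if p.1 = q.1 ∧ p.2 = q.2 + q.1 then (1:ℂ) else 0) * B *
     (Matrix.of fun p q : ZMod d × ZMod d => if p.1 = q.1 ∧ p.2 = q.2 + q.1 then (1:ℂ) else 0)ᴴ) p q
    = B (p.1, p.2 - p.1) (q.1, q.2 - q.1) := by
  simp [Matrix.mul_apply, Matrix.conjTranspose_apply, Fintype.sum_prod_type, ite_and,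
    apply_ite, ← sub_eq_iff_eq_add]

lemma A_apply (d : ℕ) [NeZero d] (M : Matrix (ZMod d) (ZMod d) ℂ) (p q : ZMod d × ZMod d) :
    ((Matrix.of fun p q : ZMod d × ZMod d => if p.1 = q.1 ∧ p.2 = q.2 + q.1 then (1:ℂ) else 0) *
      (M ⊗ₖ (1 : Matrix (ZMod d) (ZMod d) ℂ)) *
     (Matrix.of fun p q : ZMod d × ZMod d => if p.1 = q.1 ∧ p.2 = q.2 + q.1 then (1:ℂ) else 0)ᴴ) p q
    = M p.1 q.1 * (if p.2 - p.1 = q.2 - q.1 then 1 else 0) := by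
  rw [conjV_apply]
  simp [Matrix.kroneckerMap_apply, Matrix.one_apply]

/-- Lemma 3 of Appendix E of the paper.  For the generalized-CNOT unitary
`V = Σ_{i,j} |i⟩_C⟨i|_A ⊗ |j+i⟩_D⟨j|_B` on `ℂ^d ⊗ ℂ^d` (addition mod `d`), an operator `M`
on `H_A` lies in the span of the computational-basis projectors `{|i⟩⟨i|}` iff
`V(M ⊗ 1_B)V*` commutes with `1_C ⊗ N` for every operator `N` on `H_D`; i.e. the
computational-basis decomposition on the control is preferred by the target output. -/
theorem stmt11 (d : ℕ) [NeZero d]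
    (V : Matrix (ZMod d × ZMod d) (ZMod d × ZMod d) ℂ)
    (hV : V = Matrix.of fun p q => if p.1 = q.1 ∧ p.2 = q.2 + q.1 then (1 : ℂ) else 0) :
    ∀ M : Matrix (ZMod d) (ZMod d) ℂ,
      M ∈ Submodule.span ℂ (Set.range fun i : ZMod d =>
          (Matrix.single i i 1 : Matrix (ZMod d) (ZMod d) ℂ))
      ↔
      ∀ N : Matrix (ZMod d) (ZMod d) ℂ,
        (V * (M ⊗ₖ (1 : Matrix (ZMod d) (ZMod d) ℂ)) * Vᴴ) *
            ((1 : Matrix (ZMod d) (ZMod d) ℂ) ⊗ₖ N)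
          = ((1 : Matrix (ZMod d) (ZMod d) ℂ) ⊗ₖ N) *
            (V * (M ⊗ₖ (1 : Matrix (ZMod d) (ZMod d) ℂ)) * Vᴴ) := by
  subst hV
  intro M
  -- characterize span membership as diagonality
  have hspan : M ∈ Submodule.span ℂ (Set.range fun i : ZMod d =>
        (Matrix.single i i 1 : Matrix (ZMod d) (ZMod d) ℂ)) ↔
      ∀ a c : ZMod d, a ≠ c → M a c = 0 := by
    constructor
    · intro hM a c hac
      induction hM using Submodule.span_induction with
      | mem x hx =>
        obtain ⟨i, rfl⟩ := hx
        simp [Matrix.single, Matrix.of_apply]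
        rintro rfl rfl; exact hac rfl
      | zero => simp
      | add x y _ _ hx hy => simp [Matrix.add_apply, hx, hy]
      | smul r x _ hx => simp [Matrix.smul_apply, hx]
    · intro h
      have : M = ∑ i : ZMod d, M i i • Matrix.single i i 1 := by
        ext a c
        by_cases hac : a = c
        · subst hac
          simp [Matrix.sum_apply, Matrix.single, Matrix.of_apply]
        · rw [Matrix.sum_apply, h a c hac]
          symm
          apply Finset.sum_eq_zero
          intro i _
          by_cases hia : i = a
          · subst hia; simp [Matrix.single, hac]
          · simp [Matrix.single, hia]
      rw [this]
      exact Submodule.sum_mem _ fun i _ => Submodule.smul_mem _ _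
        (Submodule.subset_span ⟨i, rfl⟩)
  rw [hspan]
  constructor
  · intro h N
    ext p q
    obtain ⟨a, b⟩ := p; obtain ⟨c, e⟩ := q
    rw [Matrix.mul_apply, Matrix.mul_apply]
    simp only [Fintype.sum_prod_type, A_apply, Matrix.kroneckerMap_apply, Matrix.one_apply]
    simp only [ite_mul, mul_ite, mul_zero, zero_mul, mul_one, one_mul,
      eq_sub_iff_add_eq, sub_eq_iff_eq_add, Finset.sum_ite_eq, Finset.sum_ite_eq',
      Finset.mem_univ, if_true, Finset.sum_ite_irrel, Finset.sum_const_zero]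
    rw [Finset.sum_eq_single a (fun x _ hx => by
        apply Finset.sum_eq_zero; intro y _; simp [Ne.symm hx]) (by simp)]
    rw [Finset.sum_eq_single (e - c + a)
      (fun y _ hy => by
        rw [if_neg]
        intro h1
        exact hy (by linear_combination h1)) (by simp)]
    rw [if_pos (by ring), if_pos rfl]
    by_cases hac : a = c
    · subst hac
      have h1 : b - a + a = b := by ring
      have h2 : e - a + a = e := by ring
      rw [h1, h2, mul_comm]
    · rw [h a c hac, zero_mul, mul_zero]
  · intro h a c hac
    have := congrFun (congrFun (h (Matrix.single c 0 1)) (a, a)) (c, 0)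
    rw [Matrix.mul_apply, Matrix.mul_apply] at this
    simp only [Fintype.sum_prod_type, A_apply, Matrix.kroneckerMap_apply, Matrix.one_apply,
      ite_mul, mul_ite, mul_zero, zero_mul, mul_one, one_mul,
      eq_sub_iff_add_eq, sub_eq_iff_eq_add, Finset.sum_ite_eq, Finset.sum_ite_eq',
      Finset.mem_univ, if_true, Finset.sum_ite_irrel, Finset.sum_const_zero] at this
    have hc : a - a + c = c := by ring
    rw [hc] at this
    simpa [Matrix.single, hac, Ne.symm hac] using this
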